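/- (Marginal price relation, charge–discharge pair.) Let T ≥ 1 be a horizon, C : {1,…,T} → ℝ prices, S^end ∈ ℝ, and let x* = (p^{C*}, p^{D*}, s*) ∈ X(S^end) be an optimal schedule of F(T, C, S^end). Suppose t₁ < t₂ are in {1,…,T} with p^{C*}_{t₁} > 0, p^{D*}_{t₂} > 0, and s*_t > S̲ for all t ∈ {t₁,…,t₂−1}. Then C_{t₁} ≤ ρ^{t₂−t₁} η^C η^D C_{t₂}. -/
import Mathlib


open Finset

/-- Parameters of the energy storage system. -/
structure Params where
  Δt : ℝ
  ρ : ℝ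
  ηC : ℝ
  ηD : ℝ
  PC : ℝ
  PD : ℝ
  Slo : ℝ
  Shi : ℝ
  Sinit : ℝ

/-- Validity of the parameters: Δt > 0, ρ ∈ (0,1], ηC, ηD ∈ (0,1],
P̄^C > 0, P̄^D > 0, S̲ ≤ S̄, S̲ ≤ S^init ≤ S̄. -/
def Params.Valid (P : Params) : Prop :=
  0 < P.Δt ∧ 0 < P.ρ ∧ P.ρ ≤ 1 ∧ 0 < P.ηC ∧ P.ηC ≤ 1 ∧ 0 < P.ηD ∧ P.ηD ≤ 1 ∧
  0 < P.PC ∧ 0 < P.PD ∧ P.Slo ≤ P.Shi ∧ P.Slo ≤ P.Sinit ∧ P.Sinit ≤ P.Shi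

/-- A feasible schedule over the horizon {1,…,T}, with the convention s 0 = S^init. -/
def Feasible (P : Params) (T : ℕ) (pC pD s : ℕ → ℝ) : Prop :=
  s 0 = P.Sinit ∧
  ∀ t : ℕ, 1 ≤ t → t ≤ T →
    (s t = P.ρ * s (t - 1) + P.Δt * (P.ηC * pC t - pD t / P.ηD) ∧
     P.Slo ≤ s t ∧ s t ≤ P.Shi ∧
     0 ≤ pC t ∧ pC t ≤ P.PC ∧
     0 ≤ pD t ∧ pD t ≤ P.PD ∧
     pC t * pD t = 0)

/-- Profit Z = Σ_{t=1}^{T} Δt C_t (p^D_t − p^C_t). -/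
noncomputable def profit (P : Params) (T : ℕ) (C pC pD : ℕ → ℝ) : ℝ :=
  ∑ t ∈ Finset.Icc 1 T, P.Δt * C t * (pD t - pC t)

/-- Optimal schedule of F(T, C, S^end): feasible, meets the terminal constraint
s_T = S^end, and maximizes profit among such schedules. -/
def Optimal (P : Params) (T : ℕ) (C : ℕ → ℝ) (Send : ℝ) (pC pD s : ℕ → ℝ) : Prop :=
  Feasible P T pC pD s ∧ s T = Send ∧
  ∀ qC qD r : ℕ → ℝ, Feasible P T qC qD r → r T = Send →
    profit P T C qC qD ≤ profit P T C pC pD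

/-- Minimum reachable level S̲_T at the end of the planning horizon. -/
noncomputable def SloT (P : Params) (T : ℕ) : ℝ :=
  max P.Slo (P.ρ ^ T * P.Sinit - P.Δt * (P.PD / P.ηD) * ∑ t ∈ Finset.range T, P.ρ ^ t)

/-- Maximum reachable level S̄_T at the end of the planning horizon. -/
noncomputable def ShiT (P : Params) (T : ℕ) : ℝ :=
  min P.Shi (P.ρ ^ T * P.Sinit + P.Δt * P.ηC * P.PC * ∑ t ∈ Finset.range T, P.ρ ^ t)

set_option maxHeartbeats 1000000 in
/-- Marginal price relation (charge–discharge pair): if an optimal schedule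
charges at t₁ and discharges at t₂ > t₁, with the state of energy strictly above
S̲ on {t₁,…,t₂−1}, then C_{t₁} ≤ ρ^{t₂−t₁} η^C η^D C_{t₂}. -/
theorem marginal_charge_discharge (P : Params) (hP : P.Valid) (T : ℕ) (hT : 1 ≤ T)
    (C : ℕ → ℝ) (Send : ℝ) (pC pD s : ℕ → ℝ) (hx : Optimal P T C Send pC pD s)
    (t₁ t₂ : ℕ) (ht₁ : 1 ≤ t₁) (h12 : t₁ < t₂) (ht₂ : t₂ ≤ T)
    (hc : 0 < pC t₁) (hd : 0 < pD t₂)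
    (hs : ∀ t : ℕ, t₁ ≤ t → t ≤ t₂ - 1 → P.Slo < s t) :
    C t₁ ≤ P.ρ ^ (t₂ - t₁) * P.ηC * P.ηD * C t₂ := by
  obtain ⟨hΔt, hρ0, hρ1, hηC0, hηC1, hηD0, hηD1, hPC, hPD, hSS, hSi1, hSi2⟩ := hP
  obtain ⟨hF, hend, hopt⟩ := hx
  obtain ⟨hs0, hFt⟩ := hF
  have ht₁T : t₁ ≤ T := le_trans (le_of_lt h12) ht₂
  have h1 := hFt t₁ ht₁ ht₁T
  have h2 := hFt t₂ (le_trans ht₁ (le_of_lt h12)) ht₂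
  have hpD1 : pD t₁ = 0 := by
    rcases mul_eq_zero.mp h1.2.2.2.2.2.2.2 with h | h
    · exact absurd h (ne_of_gt hc)
    · exact h
  have hpC2 : pC t₂ = 0 := by
    rcases mul_eq_zero.mp h2.2.2.2.2.2.2.2 with h | h
    · exact h
    · exact absurd h (ne_of_gt hd)
  set K : ℝ := P.ρ ^ (t₂ - t₁) * P.ηC * P.ηD with hK
  have hK0 : 0 < K := by positivity
  have hne : (Finset.Icc t₁ (t₂ - 1)).Nonempty := ⟨t₁, by simp [Finset.mem_Icc]; omega⟩
  set m : ℝ := (Finset.Icc t₁ (t₂ - 1)).inf' hne (fun t => s t - P.Slo) with hm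
  have hm0 : 0 < m := by
    rw [hm, Finset.lt_inf'_iff]
    intro t ht
    rw [Finset.mem_Icc] at ht
    have := hs t ht.1 ht.2
    linarith
  set ε : ℝ := min (pC t₁) (min (pD t₂ / K) (m / (P.Δt * P.ηC))) with hε
  have hε0 : 0 < ε := by
    apply lt_min hc (lt_min _ _)
    · positivity
    · positivity
  have hε1 : ε ≤ pC t₁ := min_le_left _ _
  have hε2 : K * ε ≤ pD t₂ := by
    have h' : ε ≤ pD t₂ / K := le_trans (min_le_right _ _) (min_le_left _ _)
    calc K * ε ≤ K * (pD t₂ / K) := mul_le_mul_of_nonneg_left h' (le_of_lt hK0)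
    _ = pD t₂ := by field_simp
  have hε3 : P.Δt * P.ηC * ε ≤ m := by
    have h' : ε ≤ m / (P.Δt * P.ηC) := le_trans (min_le_right _ _) (min_le_right _ _)
    calc P.Δt * P.ηC * ε ≤ P.Δt * P.ηC * (m / (P.Δt * P.ηC)) :=
        mul_le_mul_of_nonneg_left h' (by positivity)
    _ = m := by field_simp
  set qC : ℕ → ℝ := fun t => if t = t₁ then pC t₁ - ε else pC t with hqC
  set qD : ℕ → ℝ := fun t => if t = t₂ then pD t₂ - K * ε else pD t with hqD
  set r : ℕ → ℝ := fun t => if t₁ ≤ t ∧ t < t₂ then s t - P.ρ ^ (t - t₁) * (P.Δt * P.ηC * ε) else s t with hr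
  have hqC1 : qC t₁ = pC t₁ - ε := by simp [hqC]
  have hqCE : ∀ t, t ≠ t₁ → qC t = pC t := by
    intro t h; simp only [hqC]; rw [if_neg h]
  have hqD2 : qD t₂ = pD t₂ - K * ε := by simp [hqD]
  have hqDE : ∀ t, t ≠ t₂ → qD t = pD t := by
    intro t h; simp only [hqD]; rw [if_neg h]
  have hrE : ∀ t, (t < t₁ ∨ t₂ ≤ t) → r t = s t := by
    intro t h; simp only [hr]; rw [if_neg (by omega)]
  have hrI : ∀ t, t₁ ≤ t → t < t₂ → r t = s t - P.ρ ^ (t - t₁) * (P.Δt * P.ηC * ε) := by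
    intro t h h'; simp only [hr]; rw [if_pos ⟨h, h'⟩]
  have hE0 : (0:ℝ) ≤ P.Δt * P.ηC * ε := by positivity
  have hmle : ∀ t, t₁ ≤ t → t < t₂ → m ≤ s t - P.Slo := by
    intro t h h'
    exact Finset.inf'_le _ (by rw [Finset.mem_Icc]; omega)
  have hfeas : Feasible P T qC qD r := by
    constructor
    · rw [hrE 0 (Or.inl (by omega))]; exact hs0
    · intro t h1t htT
      obtain ⟨heq, hlo, hhi, hc0, hcP, hd0, hdP, hcd⟩ := hFt t h1t htT
      refine ⟨?_, ?_, ?_, ?_, ?_, ?_, ?_, ?_⟩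
      · -- dynamics
        by_cases hA : t < t₁
        · rw [hrE t (Or.inl hA), hrE (t-1) (Or.inl (by omega)),
             hqCE t (by omega), hqDE t (by omega)]
          exact heq
        · by_cases hB : t = t₁
          · subst hB
            rw [hrI t le_rfl h12, hrE (t-1) (Or.inl (by omega)),
               hqC1, hqDE t (by omega)]
            rw [Nat.sub_self, pow_zero, heq]; ring
          · by_cases hC2 : t < t₂
            · rw [hrI t (by omega) hC2, hrI (t-1) (by omega) (by omega),
                 hqCE t hB, hqDE t (by omega)]
              have hpow : t - t₁ = (t - 1 - t₁) + 1 := by omega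
              rw [heq, hpow, pow_succ]; ring
            · by_cases hC3 : t = t₂
              · subst hC3
                rw [hrE t (Or.inr le_rfl), hrI (t-1) (by omega) (by omega),
                   hqCE t (by omega), hqD2]
                have hpow : t - t₁ = (t - 1 - t₁) + 1 := by omega
                rw [heq, hK, hpow, pow_succ]
                field_simp
                ring
              · rw [hrE t (Or.inr (by omega)), hrE (t-1) (Or.inr (by omega)),
                   hqCE t (by omega), hqDE t (by omega)]
                exact heq
      · -- lower bound
        by_cases hA : t₁ ≤ t ∧ t < t₂
        · rw [hrI t hA.1 hA.2]
          have hp1 : P.ρ ^ (t - t₁) ≤ 1 := pow_le_one₀ (le_of_lt hρ0) hρ1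
          have h' : P.ρ ^ (t - t₁) * (P.Δt * P.ηC * ε) ≤ 1 * (P.Δt * P.ηC * ε) :=
            mul_le_mul_of_nonneg_right hp1 hE0
          have := hmle t hA.1 hA.2
          linarith
        · rw [hrE t (by omega)]; exact hlo
      · -- upper bound
        by_cases hA : t₁ ≤ t ∧ t < t₂
        · rw [hrI t hA.1 hA.2]
          have : (0:ℝ) ≤ P.ρ ^ (t - t₁) * (P.Δt * P.ηC * ε) := by positivity
          linarith
        · rw [hrE t (by omega)]; exact hhi
      · by_cases hB : t = t₁
        · subst hB; rw [hqC1]; linarith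
        · rw [hqCE t hB]; exact hc0
      · by_cases hB : t = t₁
        · subst hB; rw [hqC1]; linarith
        · rw [hqCE t hB]; exact hcP
      · by_cases hB : t = t₂
        · subst hB; rw [hqD2]; linarith
        · rw [hqDE t hB]; exact hd0
      · by_cases hB : t = t₂
        · subst hB; rw [hqD2]
          have hKe : 0 ≤ K * ε := by positivity
          linarith
        · rw [hqDE t hB]; exact hdP
      · by_cases hB : t = t₁
        · subst hB; rw [hqDE t (by omega), hpD1, mul_zero]
        · by_cases hB2 : t = t₂
          · subst hB2; rw [hqCE t (by omega), hpC2, zero_mul]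
          · rw [hqCE t hB, hqDE t hB2]; exact hcd
  have hrT : r T = Send := by rw [hrE T (Or.inr ht₂)]; exact hend
  have hle := hopt qC qD r hfeas hrT
  have hdiff : profit P T C qC qD
      = profit P T C pC pD + (P.Δt * C t₁ * ε - P.Δt * C t₂ * (K * ε)) := by
    unfold profit
    have step : ∀ t ∈ Finset.Icc 1 T,
        P.Δt * C t * (qD t - qC t)
          = P.Δt * C t * (pD t - pC t)
            + ((if t = t₁ then P.Δt * C t₁ * ε else 0)
              + (if t = t₂ then -(P.Δt * C t₂ * (K * ε)) else 0)) := by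
      intro t ht
      by_cases h1' : t = t₁
      · subst h1'
        rw [if_pos rfl, if_neg (by omega), hqC1, hqDE t (by omega)]
        ring
      · by_cases h2' : t = t₂
        · subst h2'
          rw [if_neg (by omega), if_pos rfl, hqD2, hqCE t (by omega)]
          ring
        · rw [if_neg h1', if_neg h2', hqCE t h1', hqDE t h2']
          ring
    rw [Finset.sum_congr rfl step, Finset.sum_add_distrib, Finset.sum_add_distrib]
    have e1 : ∑ t ∈ Finset.Icc 1 T, (if t = t₁ then P.Δt * C t₁ * ε else 0)
        = P.Δt * C t₁ * ε := by
      rw [Finset.sum_ite_eq' (Finset.Icc 1 T) t₁ (fun _ => P.Δt * C t₁ * ε),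
          if_pos (by rw [Finset.mem_Icc]; omega)]
    have e2 : ∑ t ∈ Finset.Icc 1 T, (if t = t₂ then -(P.Δt * C t₂ * (K * ε)) else 0)
        = -(P.Δt * C t₂ * (K * ε)) := by
      rw [Finset.sum_ite_eq' (Finset.Icc 1 T) t₂ (fun _ => -(P.Δt * C t₂ * (K * ε))),
          if_pos (by rw [Finset.mem_Icc]; omega)]
    rw [e1, e2]; ring
  have hpos : 0 < P.Δt * ε := mul_pos hΔt hε0
  have h3 : P.Δt * ε * (C t₁ - K * C t₂) ≤ P.Δt * ε * 0 := by
    rw [mul_zero]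
    have hring : P.Δt * ε * (C t₁ - K * C t₂)
        = P.Δt * C t₁ * ε - P.Δt * C t₂ * (K * ε) := by ring
    linarith [hle, hdiff, hring.le, hring.ge]
  have h4 : C t₁ - K * C t₂ ≤ 0 := le_of_mul_le_mul_left h3 hpos
  linarith
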